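/- For the cyclic group Z_n (n ≥ 1), m(Z_n) = i(Z_n) = ν(n), where ν(n) is the number of distinct primes dividing n. -/

import Mathlib

/-- A finite subset of a group is irredundant if no element lies in the
subgroup generated by the remaining elements. -/
def Irredundant {G : Type*} [Group G] (s : Finset G) : Prop :=
  ∀ g ∈ s, g ∉ Subgroup.closure ((s : Set G) \ {g})

/-- `mRank G` : maximal size of an irredundant generating set of `G`. -/
noncomputable def mRank (G : Type*) [Group G] : ℕ :=
  sSup {n | ∃ s : Finset G, Irredundant s ∧ Subgroup.closure (s : Set G) = ⊤ ∧ s.card = n}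

/-- `iRank G` : maximal size of an irredundant subset of `G`. -/
noncomputable def iRank (G : Type*) [Group G] : ℕ :=
  sSup {n | ∃ s : Finset G, Irredundant s ∧ s.card = n}

/-- A family of subgroups is in general position. -/
def GenPos {G : Type*} [Group G] {ι : Type*} (H : ι → Subgroup G) : Prop :=
  ∀ I J : Finset ι, I ⊂ J → (⨅ j ∈ J, H j) < (⨅ i ∈ I, H i)

/-- Maximal size of a family of maximal subgroups in general position. -/
noncomputable def MaxDim (G : Type*) [Group G] : ℕ :=
  sSup {k | ∃ M : Fin k → Subgroup G, (∀ j, IsCoatom (M j)) ∧ GenPos M}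

set_option linter.unusedSectionVars false

section Core
variable {n : ℕ} [NeZero n]

/-- gcd of the values of a finset in `ZMod n`, together with `n`. -/
def dOf (s : Finset (ZMod n)) : ℕ := Nat.gcd (s.gcd ZMod.val) n

lemma dOf_dvd_n (s : Finset (ZMod n)) : dOf s ∣ n := Nat.gcd_dvd_right _ _

lemma dOf_ne_zero (s : Finset (ZMod n)) : dOf s ≠ 0 :=
  fun h => NeZero.ne n (Nat.eq_zero_of_gcd_eq_zero_right h)

lemma dOf_dvd_val {s : Finset (ZMod n)} {a : ZMod n} (ha : a ∈ s) : dOf s ∣ a.val :=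
  (Nat.gcd_dvd_left _ _).trans (Finset.gcd_dvd ha)

lemma natCast_gcd_mem (s : Finset (ZMod n)) :
    ((s.gcd ZMod.val : ℕ) : ZMod n) ∈ AddSubgroup.closure (s : Set (ZMod n)) := by
  classical
  induction s using Finset.induction_on with
  | empty => simp
  | insert a s ha ih =>
    rw [Finset.gcd_insert]
    set x := ZMod.val a with hx
    set y := s.gcd ZMod.val with hy
    have hgcd : (GCDMonoid.gcd x y : ℕ) = Nat.gcd x y := rfl
    have hb := Nat.gcd_eq_gcd_ab x y
    have h2 : ((Nat.gcd x y : ℕ) : ZMod n) =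
        (Nat.gcdA x y) • ((x : ℕ) : ZMod n) + (Nat.gcdB x y) • ((y : ℕ) : ZMod n) := by
      rw [zsmul_eq_mul, zsmul_eq_mul]
      have h3 : ((Nat.gcd x y : ℤ) : ZMod n) =
          (((x : ℤ) * Nat.gcdA x y + (y : ℤ) * Nat.gcdB x y : ℤ) : ZMod n) := by
        exact_mod_cast congrArg (fun z : ℤ => (z : ZMod n)) hb
      push_cast at h3 ⊢
      rw [h3]; ring
    rw [hgcd, h2]
    have hmem1 : ((x : ℕ) : ZMod n) ∈
        AddSubgroup.closure ((insert a s : Finset (ZMod n)) : Set (ZMod n)) := by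
      rw [hx, ZMod.natCast_rightInverse a]
      exact AddSubgroup.subset_closure (by simp)
    have hmem2 : ((y : ℕ) : ZMod n) ∈
        AddSubgroup.closure ((insert a s : Finset (ZMod n)) : Set (ZMod n)) :=
      AddSubgroup.closure_mono (by simp [Finset.coe_subset]) ih
    exact AddSubgroup.add_mem _ (AddSubgroup.zsmul_mem _ hmem1 _) (AddSubgroup.zsmul_mem _ hmem2 _)

lemma natCast_dOf_mem (s : Finset (ZMod n)) :
    ((dOf s : ℕ) : ZMod n) ∈ AddSubgroup.closure (s : Set (ZMod n)) := by
  set y := s.gcd ZMod.val with hy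
  have hb := Nat.gcd_eq_gcd_ab y n
  have h2 : ((dOf s : ℕ) : ZMod n) = (Nat.gcdA y n) • ((y : ℕ) : ZMod n) := by
    rw [zsmul_eq_mul]
    have h3 : ((Nat.gcd y n : ℤ) : ZMod n) =
        (((y : ℤ) * Nat.gcdA y n + (n : ℤ) * Nat.gcdB y n : ℤ) : ZMod n) := by
      exact_mod_cast congrArg (fun z : ℤ => (z : ZMod n)) hb
    push_cast [ZMod.natCast_self] at h3
    rw [dOf, h3]; ring
  rw [h2]
  exact AddSubgroup.zsmul_mem _ (natCast_gcd_mem s) _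

lemma mem_closure_iff_dvd (s : Finset (ZMod n)) (x : ZMod n) :
    x ∈ AddSubgroup.closure (s : Set (ZMod n)) ↔ dOf s ∣ x.val := by
  constructor
  · intro hx
    have hd : NeZero (dOf s) := ⟨dOf_ne_zero s⟩
    let f : ZMod n →+ ZMod (dOf s) := (ZMod.castHom (dOf_dvd_n s) (ZMod (dOf s))).toAddMonoidHom
    have hker : AddSubgroup.closure (s : Set (ZMod n)) ≤ f.ker := by
      rw [AddSubgroup.closure_le]
      intro a ha
      have : f a = ((a.val : ℕ) : ZMod (dOf s)) := by
        simp [f, ZMod.castHom_apply, ZMod.natCast_val]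
      simp only [SetLike.mem_coe, AddMonoidHom.mem_ker, this,
        ZMod.natCast_eq_zero_iff]
      exact dOf_dvd_val ha
    have := hker hx
    rw [AddMonoidHom.mem_ker] at this
    have hfx : ((x.val : ℕ) : ZMod (dOf s)) = 0 := by
      have h4 : f x = ((x.val : ℕ) : ZMod (dOf s)) := by
        simp [f, ZMod.castHom_apply, ZMod.natCast_val]
      rw [← h4]; exact this
    rwa [ZMod.natCast_eq_zero_iff] at hfx
  · rintro ⟨k, hk⟩
    have : x = k • ((dOf s : ℕ) : ZMod n) := by
      rw [nsmul_eq_mul]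
      conv_lhs => rw [← ZMod.natCast_rightInverse x]
      rw [hk]; push_cast; ring
    rw [this]
    exact AddSubgroup.nsmul_mem _ (natCast_dOf_mem s) _

end Core

lemma mem_mclosure {A : Type*} [AddGroup A] (S : Set (Multiplicative A)) (g : Multiplicative A) :
    g ∈ Subgroup.closure S ↔
      Multiplicative.toAdd g ∈ AddSubgroup.closure (Multiplicative.toAdd '' S) := by
  constructor
  · intro h
    refine Subgroup.closure_induction ?_ ?_ ?_ ?_ h
    · intro x hx; exact AddSubgroup.subset_closure ⟨x, hx, rfl⟩
    · exact AddSubgroup.zero_mem _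
    · intro x y _ _ hx hy; exact AddSubgroup.add_mem _ hx hy
    · intro x _ hx; exact AddSubgroup.neg_mem _ hx
  · intro h
    have key : ∀ a, a ∈ AddSubgroup.closure (Multiplicative.toAdd '' S) →
        Multiplicative.ofAdd a ∈ Subgroup.closure S := by
      intro a ha
      refine AddSubgroup.closure_induction ?_ ?_ ?_ ?_ ha
      · rintro x ⟨y, hy, rfl⟩; exact Subgroup.subset_closure hy
      · exact Subgroup.one_mem _
      · intro x y _ _ hx hy; exact Subgroup.mul_mem _ hx hy
      · intro x _ hx; exact Subgroup.inv_mem _ hx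
    exact key _ h

section Mult
variable {n : ℕ} [NeZero n]

/-- value of an element of `Multiplicative (ZMod n)` as a natural number. -/
def mval (g : Multiplicative (ZMod n)) : ℕ := (Multiplicative.toAdd g).val

/-- gcd of the values of a multiplicative finset, together with `n`. -/
def DOf (t : Finset (Multiplicative (ZMod n))) : ℕ := Nat.gcd (t.gcd mval) n

lemma DOf_dvd_n (t : Finset (Multiplicative (ZMod n))) : DOf t ∣ n := Nat.gcd_dvd_right _ _

lemma DOf_ne_zero (t : Finset (Multiplicative (ZMod n))) : DOf t ≠ 0 :=
  fun h => NeZero.ne n (Nat.eq_zero_of_gcd_eq_zero_right h)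

lemma DOf_dvd_mval {t : Finset (Multiplicative (ZMod n))} {a : Multiplicative (ZMod n)}
    (ha : a ∈ t) : DOf t ∣ mval a :=
  (Nat.gcd_dvd_left _ _).trans (Finset.gcd_dvd ha)

lemma mem_mclosure_iff_dvd (t : Finset (Multiplicative (ZMod n)))
    (x : Multiplicative (ZMod n)) :
    x ∈ Subgroup.closure (t : Set (Multiplicative (ZMod n))) ↔ DOf t ∣ mval x := by
  classical
  rw [mem_mclosure]
  have himg : Multiplicative.toAdd '' (t : Set (Multiplicative (ZMod n))) =
      ((t.image Multiplicative.toAdd : Finset (ZMod n)) : Set (ZMod n)) := by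
    simp [Finset.coe_image]
  rw [himg, mem_closure_iff_dvd]
  have hD : dOf (t.image Multiplicative.toAdd) = DOf t := by
    unfold dOf DOf
    rw [Finset.gcd_image]
    rfl
  rw [hD]; rfl

lemma card_le_omega (t : Finset (Multiplicative (ZMod n))) (ht : Irredundant t) :
    t.card ≤ n.primeFactors.card := by
  classical
  have hkey : ∀ g ∈ t, ∃ p,
      (DOf t).factorization p < (DOf (t.erase g)).factorization p := by
    intro g hg
    have h1 : DOf t ∣ DOf (t.erase g) :=
      Nat.dvd_gcd ((Nat.gcd_dvd_left _ _).trans (Finset.gcd_mono (Finset.erase_subset _ _)))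
        (Nat.gcd_dvd_right _ _)
    have h2 : ¬ DOf (t.erase g) ∣ mval g := by
      have h := ht g hg
      rw [← Finset.coe_erase, mem_mclosure_iff_dvd] at h
      exact h
    have h3 : DOf t ∣ mval g := DOf_dvd_mval hg
    by_contra hall
    push_neg at hall
    have hdvd : DOf (t.erase g) ∣ DOf t := by
      rw [← Nat.factorization_le_iff_dvd (DOf_ne_zero _) (DOf_ne_zero _)]
      intro p
      exact hall p
    exact h2 ((Nat.dvd_antisymm h1 hdvd) ▸ h3)
  choose! P hP using hkey
  refine Finset.card_le_card_of_injOn P ?_ ?_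
  · intro g hg
    have h := hP g hg
    have hsupp : P g ∈ (DOf (t.erase g)).primeFactors := by
      rw [← Nat.support_factorization, Finsupp.mem_support_iff]
      omega
    exact Nat.primeFactors_mono (DOf_dvd_n _) (NeZero.ne n) hsupp
  · intro g hg h hh hgh
    by_contra hne
    have hpg := hP g hg
    have hph : (DOf t).factorization (P g) < (DOf (t.erase h)).factorization (P g) := by
      rw [hgh]; exact hP h hh
    have hmem : h ∈ t.erase g := Finset.mem_erase.2 ⟨fun e => hne e.symm, hh⟩
    set w := Nat.gcd (mval h) n with hw
    have hbw : DOf (t.erase g) ∣ w :=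
      Nat.dvd_gcd (DOf_dvd_mval hmem) (DOf_dvd_n _)
    have htw : Nat.gcd w (DOf (t.erase h)) ∣ DOf t := by
      refine Nat.dvd_gcd (Finset.dvd_gcd ?_) ((Nat.gcd_dvd_left w _).trans (Nat.gcd_dvd_right _ n))
      intro e he
      by_cases hehh : e = h
      · rw [hehh]; exact (Nat.gcd_dvd_left _ _).trans (Nat.gcd_dvd_left _ _)
      · exact (Nat.gcd_dvd_right w _).trans (DOf_dvd_mval (Finset.mem_erase.2 ⟨hehh, he⟩))
    have hw0 : w ≠ 0 := fun h0 => NeZero.ne n (Nat.eq_zero_of_gcd_eq_zero_right h0)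
    have hfw := Nat.factorization_gcd hw0 (DOf_ne_zero (t.erase h))
    have hle : (Nat.gcd w (DOf (t.erase h))).factorization (P g)
        ≤ (DOf t).factorization (P g) := by
      have := (Nat.factorization_le_iff_dvd (Nat.gcd_ne_zero_left hw0) (DOf_ne_zero t)).2 htw
      exact this (P g)
    rw [hfw, Finsupp.inf_apply] at hle
    have hbwp : (DOf (t.erase g)).factorization (P g) ≤ w.factorization (P g) :=
      (Nat.factorization_le_iff_dvd (DOf_ne_zero _) hw0).2 hbw (P g)
    omega

/-- The generator attached to a prime `p` dividing `n`. -/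
noncomputable def egen (n p : ℕ) : Multiplicative (ZMod n) :=
  Multiplicative.ofAdd ((ordCompl[p] n : ℕ) : ZMod n)

lemma ordCompl_lt' {p : ℕ} (hp : p ∈ n.primeFactors) : ordCompl[p] n < n := by
  obtain ⟨hpp, hpd, hn0⟩ := Nat.mem_primeFactors.1 hp
  exact Nat.div_lt_self (Nat.pos_of_ne_zero hn0)
    (one_lt_pow' hpp.one_lt (Nat.pos_iff_ne_zero.1 (hpp.factorization_pos_of_dvd hn0 hpd)))

lemma mval_egen {p : ℕ} (hp : p ∈ n.primeFactors) :
    mval (egen n p) = ordCompl[p] n :=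
  ZMod.val_cast_of_lt (ordCompl_lt' hp)

lemma prime_dvd_ordCompl {p q : ℕ} (hp : p ∈ n.primeFactors) (hq : q ∈ n.primeFactors)
    (hpq : p ≠ q) : p ∣ ordCompl[q] n := by
  obtain ⟨hpp, hpd, hn0⟩ := Nat.mem_primeFactors.1 hp
  obtain ⟨hqp, hqd, -⟩ := Nat.mem_primeFactors.1 hq
  have hcop : Nat.Coprime p (ordProj[q] n) :=
    Nat.Coprime.pow_right _ ((Nat.coprime_primes hpp hqp).2 hpq)
  have : p ∣ ordProj[q] n * ordCompl[q] n := by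
    rw [Nat.ordProj_mul_ordCompl_eq_self]; exact hpd
  exact (Nat.Coprime.dvd_of_dvd_mul_left hcop this)

lemma egen_injOn : Set.InjOn (egen n) n.primeFactors := by
  intro p hp q hq hpq
  by_contra hne
  have h1 : mval (egen n p) = mval (egen n q) := by rw [hpq]
  rw [mval_egen hp, mval_egen hq] at h1
  have h2 : p ∣ ordCompl[q] n := prime_dvd_ordCompl hp hq hne
  rw [← h1] at h2
  obtain ⟨hpp, hpd, hn0⟩ := Nat.mem_primeFactors.1 hp
  exact Nat.not_dvd_ordCompl hpp hn0 h2

/-- The canonical irredundant generating set of `ZMod n` of size `ω(n)`. -/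
noncomputable def sGen (n : ℕ) [NeZero n] : Finset (Multiplicative (ZMod n)) :=
  n.primeFactors.image (egen n)

lemma sGen_card : (sGen n).card = n.primeFactors.card :=
  Finset.card_image_of_injOn egen_injOn

lemma DOf_sGen : DOf (sGen n) = 1 := by
  by_contra hne
  obtain ⟨q, hq, hqd⟩ := Nat.exists_prime_and_dvd hne
  have hqn : q ∣ n := hqd.trans (Nat.gcd_dvd_right _ _)
  have hqf : q ∈ n.primeFactors := Nat.mem_primeFactors.2 ⟨hq, hqn, NeZero.ne n⟩
  have hmem : egen n q ∈ sGen n := Finset.mem_image_of_mem _ hqf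
  have hd : DOf (sGen n) ∣ mval (egen n q) :=
    (Nat.gcd_dvd_left _ _).trans (Finset.gcd_dvd hmem)
  rw [mval_egen hqf] at hd
  exact Nat.not_dvd_ordCompl hq (NeZero.ne n) (hqd.trans hd)

lemma dvd_DOf_erase {p : ℕ} (hp : p ∈ n.primeFactors) :
    p ∣ DOf ((sGen n).erase (egen n p)) := by
  classical
  refine Nat.dvd_gcd (Finset.dvd_gcd ?_) (Nat.mem_primeFactors.1 hp).2.1
  intro e he
  obtain ⟨hne, he'⟩ := Finset.mem_erase.1 he
  obtain ⟨q, hq, rfl⟩ := Finset.mem_image.1 he'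
  have hqp : p ≠ q := fun h => hne (by rw [h])
  rw [mval_egen hq]
  exact prime_dvd_ordCompl hp hq hqp

lemma sGen_irred : Irredundant (sGen n) := by
  classical
  intro g hg
  obtain ⟨p, hp, rfl⟩ := Finset.mem_image.1 hg
  rw [← Finset.coe_erase, mem_mclosure_iff_dvd]
  intro hdvd
  have h1 : p ∣ mval (egen n p) := (dvd_DOf_erase hp).trans hdvd
  rw [mval_egen hp] at h1
  obtain ⟨hpp, hpd, hn0⟩ := Nat.mem_primeFactors.1 hp
  exact Nat.not_dvd_ordCompl hpp hn0 h1

lemma sGen_top : Subgroup.closure ((sGen n : Finset (Multiplicative (ZMod n))) :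
    Set (Multiplicative (ZMod n))) = ⊤ := by
  rw [Subgroup.eq_top_iff']
  intro x
  rw [mem_mclosure_iff_dvd, DOf_sGen]
  exact one_dvd _

end Mult

theorem stmt10 (n : ℕ) (hn : 1 ≤ n) :
    mRank (Multiplicative (ZMod n)) = n.primeFactors.card ∧
    iRank (Multiplicative (ZMod n)) = n.primeFactors.card := by
  haveI : NeZero n := ⟨by omega⟩
  constructor
  · refine IsGreatest.csSup_eq ⟨⟨sGen n, sGen_irred, sGen_top, sGen_card⟩, ?_⟩
    rintro k ⟨s, hs, -, rfl⟩
    exact card_le_omega s hs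
  · refine IsGreatest.csSup_eq ⟨⟨sGen n, sGen_irred, sGen_card⟩, ?_⟩
    rintro k ⟨s, hs, rfl⟩
    exact card_le_omega s hs
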